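/- Let x₀ ∈ (0,L), let V : (0,L) → ℝ be non-increasing and non-constant, and let f : (0,L) → ℝ be integrable with f < 0 on (0,x₀), f > 0 on (x₀,L), and ∫₀^L f = 0. Then ∫₀^L V f dx < 0. -/

import Mathlib

open MeasureTheory

lemma neg_integral_of_neg {a b : ℝ} (hab : a < b) {f : ℝ → ℝ}
    (hfi : IntegrableOn f (Set.Ioo a b))
    (hneg : ∀ x ∈ Set.Ioo a b, f x < 0) :
    ∫ x in Set.Ioo a b, f x < 0 := by
  have h1 : 0 < ∫ x in Set.Ioo a b, -f x := by
    rw [setIntegral_pos_iff_support_of_nonneg_ae]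
    · have hsupp : Set.Ioo a b ⊆ Function.support (fun x => -f x) ∩ Set.Ioo a b :=
        fun t ht => ⟨fun h => absurd (neg_eq_zero.mp h) (ne_of_lt (hneg t ht)), ht⟩
      calc (0:ENNReal) < volume (Set.Ioo a b) := by simp [Real.volume_Ioo, hab]
        _ ≤ _ := measure_mono hsupp
    · exact (ae_restrict_iff' measurableSet_Ioo).2 (Filter.Eventually.of_forall
        fun t ht => le_of_lt (neg_pos.2 (hneg t ht)))
    · exact hfi.neg
  rw [integral_neg] at h1
  linarith

lemma pos_integral_of_pos {a b : ℝ} (hab : a < b) {f : ℝ → ℝ}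
    (hfi : IntegrableOn f (Set.Ioo a b))
    (hpos : ∀ x ∈ Set.Ioo a b, 0 < f x) :
    0 < ∫ x in Set.Ioo a b, f x := by
  have := neg_integral_of_neg hab hfi.neg (f := fun x => -f x)
    (fun t ht => neg_lt_zero.2 (hpos t ht))
  rw [integral_neg] at this
  linarith

/-- Key monotonicity estimate: if `V` is non-increasing and non-constant on `(0,L)` and
`f` is negative on `(0,x₀)`, positive on `(x₀,L)` with zero mean, then `∫ V f < 0`. -/
theorem integral_antitone_mul_sign_change_neg (L x₀ : ℝ) (hx₀ : x₀ ∈ Set.Ioo 0 L)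
    (V f : ℝ → ℝ)
    (hV : AntitoneOn V (Set.Ioo 0 L))
    (hVnc : ¬ ∀ x ∈ Set.Ioo 0 L, ∀ y ∈ Set.Ioo 0 L, V x = V y)
    (hf : IntegrableOn f (Set.Ioo 0 L))
    (hVf : IntegrableOn (fun x => V x * f x) (Set.Ioo 0 L))
    (hf1 : ∀ x ∈ Set.Ioo 0 x₀, f x < 0)
    (hf2 : ∀ x ∈ Set.Ioo x₀ L, 0 < f x)
    (hf0 : ∫ x in Set.Ioo 0 L, f x = 0) :
    ∫ x in Set.Ioo 0 L, V x * f x < 0 := by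
  push_neg at hVnc
  obtain ⟨x, hx, y, hy, hxy⟩ := hVnc
  set c := V x₀ with hc
  obtain ⟨z, hz, hzc⟩ : ∃ z ∈ Set.Ioo 0 L, V z ≠ c := by
    by_cases h : V x = c
    · exact ⟨y, hy, fun h' => hxy (h.trans h'.symm)⟩
    · exact ⟨x, hx, h⟩
  set g : ℝ → ℝ := fun t => (V t - c) * f t with hg_def
  have hg : IntegrableOn g (Set.Ioo 0 L) := by
    have := hVf.sub (hf.const_mul c)
    simpa [hg_def, sub_mul, Pi.sub_def] using this
  have key : ∫ t in Set.Ioo 0 L, g t = ∫ t in Set.Ioo 0 L, V t * f t := by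
    have h1 : ∫ t in Set.Ioo 0 L, g t
        = (∫ t in Set.Ioo 0 L, V t * f t) - ∫ t in Set.Ioo 0 L, c * f t := by
      rw [← integral_sub hVf (hf.const_mul c)]
      simp [hg_def, sub_mul]
    rw [h1, integral_const_mul, hf0]
    ring
  rw [← key]
  have hgle : ∀ t ∈ Set.Ioo 0 L, g t ≤ 0 := by
    intro t ht
    rcases lt_trichotomy t x₀ with h | h | h
    · have hVt : c ≤ V t := hV ⟨ht.1, lt_trans h hx₀.2⟩ hx₀ h.le
      have hft : f t < 0 := hf1 t ⟨ht.1, h⟩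
      exact mul_nonpos_of_nonneg_of_nonpos (by linarith) hft.le
    · simp [hg_def, h, hc]
    · have hVt : V t ≤ c := hV hx₀ ⟨lt_trans hx₀.1 h, ht.2⟩ h.le
      have hft : 0 < f t := hf2 t ⟨h, ht.2⟩
      exact mul_nonpos_of_nonpos_of_nonneg (by linarith) hft.le
  rcases hzc.lt_or_gt with hlt | hgt
  · -- V z < c : z > x₀, use interval (z, L)
    have hzx : x₀ < z := by
      by_contra h
      push_neg at h
      exact absurd (hV hz hx₀ h) (not_le.2 hlt)
    have hsplit : Set.Ioo 0 L = Set.Ioc 0 z ∪ Set.Ioo z L :=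
      (Set.Ioc_union_Ioo_eq_Ioo hz.1.le hz.2).symm
    have hsub1 : Set.Ioc 0 z ⊆ Set.Ioo 0 L := fun t ht => ⟨ht.1, lt_of_le_of_lt ht.2 hz.2⟩
    have hsub2 : Set.Ioo z L ⊆ Set.Ioo 0 L := fun t ht => ⟨lt_trans hz.1 ht.1, ht.2⟩
    have hdisj : Disjoint (Set.Ioc 0 z) (Set.Ioo z L) := by
      rw [Set.disjoint_left]
      rintro t ⟨_, h2⟩ ⟨h3, _⟩
      exact absurd h3 (not_lt.2 h2)
    rw [hsplit, setIntegral_union hdisj measurableSet_Ioo (hg.mono_set hsub1) (hg.mono_set hsub2)]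
    have h1 : ∫ t in Set.Ioc 0 z, g t ≤ 0 :=
      setIntegral_nonpos measurableSet_Ioc fun t ht => hgle t (hsub1 ht)
    have h2 : ∫ t in Set.Ioo z L, g t < 0 := by
      have hle : ∀ t ∈ Set.Ioo z L, g t ≤ (V z - c) * f t := by
        intro t ht
        have hVt : V t ≤ V z := hV hz (hsub2 ht) ht.1.le
        have hft : 0 < f t := hf2 t ⟨lt_trans hzx ht.1, ht.2⟩
        exact mul_le_mul_of_nonneg_right (by linarith) hft.le
      have hmono : ∫ t in Set.Ioo z L, g t ≤ ∫ t in Set.Ioo z L, (V z - c) * f t :=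
        setIntegral_mono_on (hg.mono_set hsub2) ((hf.mono_set hsub2).const_mul _)
          measurableSet_Ioo hle
      have hposint : 0 < ∫ t in Set.Ioo z L, f t :=
        pos_integral_of_pos hz.2 (hf.mono_set hsub2)
          (fun t ht => hf2 t ⟨lt_trans hzx ht.1, ht.2⟩)
      calc ∫ t in Set.Ioo z L, g t ≤ (V z - c) * ∫ t in Set.Ioo z L, f t := by
            rwa [integral_const_mul] at hmono
        _ < 0 := mul_neg_of_neg_of_pos (by linarith) hposint
    linarith
  · -- V z > c : z < x₀, use interval (0, z)
    have hzx : z < x₀ := by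
      by_contra h
      push_neg at h
      exact absurd (hV hx₀ hz h) (not_le.2 hgt)
    have hsplit : Set.Ioo 0 L = Set.Ioo 0 z ∪ Set.Ico z L :=
      (Set.Ioo_union_Ico_eq_Ioo hz.1 hz.2.le).symm
    have hsub1 : Set.Ioo 0 z ⊆ Set.Ioo 0 L := fun t ht => ⟨ht.1, lt_trans ht.2 hz.2⟩
    have hsub2 : Set.Ico z L ⊆ Set.Ioo 0 L := fun t ht => ⟨lt_of_lt_of_le hz.1 ht.1, ht.2⟩
    have hdisj : Disjoint (Set.Ioo 0 z) (Set.Ico z L) := by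
      rw [Set.disjoint_left]
      rintro t ⟨_, h2⟩ ⟨h3, _⟩
      exact absurd h3 (not_le.2 h2)
    rw [hsplit, setIntegral_union hdisj measurableSet_Ico (hg.mono_set hsub1) (hg.mono_set hsub2)]
    have h2 : ∫ t in Set.Ico z L, g t ≤ 0 :=
      setIntegral_nonpos measurableSet_Ico fun t ht => hgle t (hsub2 ht)
    have h1 : ∫ t in Set.Ioo 0 z, g t < 0 := by
      have hle : ∀ t ∈ Set.Ioo 0 z, g t ≤ (V z - c) * f t := by
        intro t ht
        have hVt : V z ≤ V t := hV (hsub1 ht) hz ht.2.le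
        have hft : f t < 0 := hf1 t ⟨ht.1, lt_trans ht.2 hzx⟩
        exact mul_le_mul_of_nonpos_right (by linarith) hft.le
      have hmono : ∫ t in Set.Ioo 0 z, g t ≤ ∫ t in Set.Ioo 0 z, (V z - c) * f t :=
        setIntegral_mono_on (hg.mono_set hsub1) ((hf.mono_set hsub1).const_mul _)
          measurableSet_Ioo hle
      have hnegint : ∫ t in Set.Ioo 0 z, f t < 0 :=
        neg_integral_of_neg hz.1 (hf.mono_set hsub1)
          (fun t ht => hf1 t ⟨ht.1, lt_trans ht.2 hzx⟩)
      calc ∫ t in Set.Ioo 0 z, g t ≤ (V z - c) * ∫ t in Set.Ioo 0 z, f t := by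
            rwa [integral_const_mul] at hmono
        _ < 0 := mul_neg_of_pos_of_neg (by linarith) hnegint
    linarith
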